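/- If ξ = ξ' = 0, i.e. z = √2·cos η and z' = √2·cos η', then Re F(e^{it}) = 1 + ½cos 2η + ½cos 2η' + log τ for all t ∈ (−π, π], i.e. Re F is constant on the unit circle and equals Re F(a⁻¹). -/

import Mathlib

noncomputable def Fphase (τ : ℝ) (z z' : ℂ) (s : ℂ) : ℂ :=
  s * (z + z') ^ 2 / (2 * (1 + s)) - s * (z - z') ^ 2 / (2 * (1 - s))
    - Complex.log s + Complex.log (τ : ℂ)

lemma key_re (c sn A B : ℝ) (h1 : c ≠ 1) (h2 : c ≠ -1) (hp : sn^2 = 1 - c^2)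
    (S : ℂ) (hS : S = (c:ℂ) + (sn:ℂ)*Complex.I) :
    (S * (A:ℂ)^2 / (2*(1+S)) - S * (B:ℂ)^2 / (2*(1-S))).re = A^2/4 + B^2/4 := by
  have hd1 : (1:ℝ) + c ≠ 0 := by intro h; apply h2; linarith
  have hd2 : (1:ℝ) - c ≠ 0 := by intro h; apply h1; linarith
  simp [hS, ← Complex.ofReal_pow, Complex.div_re, Complex.normSq_apply, Complex.add_re,
    Complex.add_im, Complex.mul_re, Complex.mul_im]
  have e1 : 2 * (1 + c) * (2 * (1 + c)) + 2 * sn * (2 * sn) = 8 * (1+c) := by nlinarith [hp]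
  have e2 : 2 * (1 - c) * (2 * (1 - c)) + 2 * sn * (2 * sn) = 8 * (1-c) := by nlinarith [hp]
  rw [e1, e2]
  field_simp
  linear_combination (8*A^2*(1-c)+8*B^2*(1+c)) * hp

theorem ReF_constant_on_unit_circle (τ η η' : ℝ) (hτ : 0 < τ) (hτ1 : τ ≤ 1)
    (z z' : ℂ)
    (hz : z = (Real.sqrt 2 * Real.cos η : ℝ))
    (hz' : z' = (Real.sqrt 2 * Real.cos η' : ℝ)) :
    ∀ t : ℝ, -Real.pi < t → t ≤ Real.pi →
      Complex.exp (Complex.I * t) ≠ 1 → Complex.exp (Complex.I * t) ≠ -1 →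
      (Fphase τ z z' (Complex.exp (Complex.I * t))).re =
        1 + Real.cos (2 * η) / 2 + Real.cos (2 * η') / 2 + Real.log τ := by
  intro t _ _ hne1 hnem1
  set S := Complex.exp (Complex.I * t) with hSdef
  have hS : S = (Real.cos t : ℂ) + (Real.sin t : ℂ) * Complex.I := by
    rw [hSdef, mul_comm, Complex.exp_mul_I, Complex.ofReal_cos, Complex.ofReal_sin]
  have hp : Real.sin t ^ 2 = 1 - Real.cos t ^ 2 := by
    have := Real.sin_sq_add_cos_sq t; linarith
  have hc1 : Real.cos t ≠ 1 := by
    intro h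
    apply hne1
    have hs0 : Real.sin t = 0 := by nlinarith [hp]
    rw [hS, h, hs0]; simp
  have hcm1 : Real.cos t ≠ -1 := by
    intro h
    apply hnem1
    have hs0 : Real.sin t = 0 := by nlinarith [hp]
    rw [hS, h, hs0]; simp
  set x := Real.sqrt 2 * Real.cos η with hx
  set y := Real.sqrt 2 * Real.cos η' with hy
  have hzz : z + z' = ((x + y : ℝ) : ℂ) := by rw [hz, hz']; push_cast; ring
  have hzz' : z - z' = ((x - y : ℝ) : ℂ) := by rw [hz, hz']; push_cast; ring
  have hmain : (S * (z + z') ^ 2 / (2 * (1 + S)) - S * (z - z') ^ 2 / (2 * (1 - S))).re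
      = (x+y)^2/4 + (x-y)^2/4 := by
    rw [hzz, hzz']
    exact key_re (Real.cos t) (Real.sin t) (x+y) (x-y) hc1 hcm1 hp S hS
  have hlogS : (Complex.log S).re = 0 := by
    rw [Complex.log_re, hSdef, Complex.norm_exp]
    simp
  have hlogτ : (Complex.log (τ : ℂ)).re = Real.log τ := by
    rw [Complex.log_re, Complex.norm_real, Real.norm_eq_abs, abs_of_pos hτ]
  rw [Fphase, Complex.add_re, Complex.sub_re, hmain, hlogS, hlogτ]
  have hx2 : x^2 = 1 + Real.cos (2*η) := by
    rw [hx, Real.cos_two_mul]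
    have : Real.sqrt 2 ^ 2 = 2 := Real.sq_sqrt (by norm_num)
    nlinarith [this]
  have hy2 : y^2 = 1 + Real.cos (2*η') := by
    rw [hy, Real.cos_two_mul]
    have : Real.sqrt 2 ^ 2 = 2 := Real.sq_sqrt (by norm_num)
    nlinarith [this]
  nlinarith [hx2, hy2]
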